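/- In a flat ABA+ framework satisfying the Axiom of Weak Contraposition, if E is a <-stable extension and ψ ∈ Cn(E) ∩ 𝒜, then E \ {ψ} is a <-stable extension of the framework F' = (ℒ, ℛ ∪ {ψ ← ⊤}, 𝒜 \ {ψ}, ‾, ≤') obtained by confirming ψ as a fact and removing it from the assumptions (≤' being the restriction of ≤), and Cn'(E \ {ψ}) = Cn(E). -/

import Mathlib

/-- A rule with a head and a (finite) body. A rule with empty body is a fact `head ← ⊤`. -/
structure ABARule (L : Type) where
  head : L
  body : List L

/-- Derivability (existence of a finite deduction tree) of a formula from a support set `S`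
using rules in `Rs`: leaves are in `S` (or `⊤`, i.e. rules with empty body). -/
inductive Deduces {L : Type} (Rs : Set (ABARule L)) (S : Set L) : L → Prop
  | assumption {φ : L} (h : φ ∈ S) : Deduces Rs S φ
  | rule {r : ABARule L} (hr : r ∈ Rs) (h : ∀ b ∈ r.body, Deduces Rs S b) :
      Deduces Rs S r.head

/-- An ABA⁺ framework: deductive system `(L, rules)`, non-empty set of assumptions,
total contrary map, and a preorder `le` on the assumptions. -/
structure ABAFramework (L : Type) where
  rules : Set (ABARule L)
  assumptions : Set L
  assumptions_nonempty : assumptions.Nonempty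
  contrary : L → L
  le : L → L → Prop
  le_refl : ∀ a ∈ assumptions, le a a
  le_trans : ∀ a ∈ assumptions, ∀ b ∈ assumptions, ∀ c ∈ assumptions,
      le a b → le b c → le a c

namespace ABAFramework

variable {L : Type}

/-- Strict part of the preference preorder. -/
def lt (F : ABAFramework L) (a b : L) : Prop := F.le a b ∧ ¬ F.le b a

/-- Standard (preference-free) ABA attack: some `A' ⊆ A` deduces the contrary of some `β ∈ B`. -/
def attacks (F : ABAFramework L) (A B : Set L) : Prop :=
  ∃ β ∈ B, ∃ A' ⊆ A, Deduces F.rules A' (F.contrary β)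

/-- `<`-attack: normal attack or reverse attack. -/
def ltAttacks (F : ABAFramework L) (A B : Set L) : Prop :=
  (∃ β ∈ B, ∃ A' ⊆ A, Deduces F.rules A' (F.contrary β) ∧ ∀ α' ∈ A', ¬ F.lt α' β) ∨
  (∃ α ∈ A, ∃ B' ⊆ B, Deduces F.rules B' (F.contrary α) ∧ ∃ β' ∈ B', F.lt β' α)

def conflictFree (F : ABAFramework L) (E : Set L) : Prop := ¬ F.attacks E E

def ltConflictFree (F : ABAFramework L) (E : Set L) : Prop := ¬ F.ltAttacks E E

def ltDefends (F : ABAFramework L) (E : Set L) (α : L) : Prop :=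
  ∀ B ⊆ F.assumptions, F.ltAttacks B {α} → F.ltAttacks E B

def ltAdmissible (F : ABAFramework L) (E : Set L) : Prop :=
  E ⊆ F.assumptions ∧ F.ltConflictFree E ∧ ∀ α ∈ E, F.ltDefends E α

def stable (F : ABAFramework L) (E : Set L) : Prop :=
  E ⊆ F.assumptions ∧ F.conflictFree E ∧
    ∀ β ∈ F.assumptions, β ∉ E → F.attacks E {β}

def ltStable (F : ABAFramework L) (E : Set L) : Prop :=
  E ⊆ F.assumptions ∧ F.ltConflictFree E ∧
    ∀ β ∈ F.assumptions, β ∉ E → F.ltAttacks E {β}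

def ltComplete (F : ABAFramework L) (E : Set L) : Prop :=
  F.ltAdmissible E ∧ ∀ α ∈ F.assumptions, F.ltDefends E α → α ∈ E

def ltPreferred (F : ABAFramework L) (E : Set L) : Prop :=
  F.ltAdmissible E ∧ ∀ E', F.ltAdmissible E' → E ⊆ E' → E' = E

def ltGrounded (F : ABAFramework L) (E : Set L) : Prop :=
  F.ltComplete E ∧ ∀ E', F.ltComplete E' → E' ⊆ E → E' = E

/-- `E` is `<`-admissible and contained in all `<`-preferred extensions. -/
def ltIdealCandidate (F : ABAFramework L) (E : Set L) : Prop :=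
  F.ltAdmissible E ∧ ∀ P, F.ltPreferred P → E ⊆ P

def ltIdeal (F : ABAFramework L) (E : Set L) : Prop :=
  F.ltIdealCandidate E ∧ ∀ E', F.ltIdealCandidate E' → E ⊆ E' → E' = E

/-- Flatness: no assumption is the head of any rule. -/
def Flat (F : ABAFramework L) : Prop := ∀ r ∈ F.rules, r.head ∉ F.assumptions

/-- Axiom of Contraposition. -/
def Contraposition (F : ABAFramework L) : Prop :=
  ∀ A' ⊆ F.assumptions, ∀ β ∈ F.assumptions,
    Deduces F.rules A' (F.contrary β) →
      ∀ α ∈ A', Deduces F.rules ((A' \ {α}) ∪ {β}) (F.contrary α)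

/-- Axiom of Weak Contraposition. -/
def WeakContraposition (F : ABAFramework L) : Prop :=
  ∀ A' ⊆ F.assumptions, ∀ β ∈ F.assumptions,
    Deduces F.rules A' (F.contrary β) → (∃ α ∈ A', F.lt α β) →
      ∃ α ∈ A', F.lt α β ∧ Deduces F.rules ((A' \ {α}) ∪ {β}) (F.contrary α)

/-- The `<`-defence operator `Def`. -/
def DefOp (F : ABAFramework L) (A : Set L) : Set L :=
  {α ∈ F.assumptions | F.ltDefends A α}

/-- Conclusions of a set `E`. -/
def Cn (F : ABAFramework L) (E : Set L) : Set L :=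
  {φ | ∃ S ⊆ E, Deduces F.rules S φ}

end ABAFramework

open ABAFramework

section Aux
variable {L : Type}

lemma deduces_mono {Rs : Set (ABARule L)} {S S' : Set L} (hSS : S ⊆ S') {φ : L}
    (h : Deduces Rs S φ) : Deduces Rs S' φ := by
  induction h with
  | assumption h => exact Deduces.assumption (hSS h)
  | rule hr h ih => exact Deduces.rule hr ih

lemma deduces_mono_rules {Rs Rs' : Set (ABARule L)} (hR : Rs ⊆ Rs') {S : Set L} {φ : L}
    (h : Deduces Rs S φ) : Deduces Rs' S φ := by
  induction h with
  | assumption h => exact Deduces.assumption h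
  | rule hr h ih => exact Deduces.rule (hR hr) ih

lemma deduces_cut {Rs : Set (ABARule L)} {S T : Set L} {φ ψ : L}
    (h : Deduces Rs S φ) (hT : Deduces Rs T ψ) :
    Deduces Rs ((S \ {ψ}) ∪ T) φ := by
  induction h with
  | @assumption a h =>
    by_cases ha : a = ψ
    · subst ha; exact deduces_mono Set.subset_union_right hT
    · exact Deduces.assumption (Set.mem_union_left _ ⟨h, ha⟩)
  | rule hr h ih => exact Deduces.rule hr ih

lemma deduces_elim_fact {Rs : Set (ABARule L)} {S : Set L} {ψ φ : L}
    (h : Deduces (insert ⟨ψ, []⟩ Rs) S φ) : Deduces Rs (insert ψ S) φ := by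
  induction h with
  | assumption h => exact Deduces.assumption (Set.mem_insert_iff.mpr (Or.inr h))
  | @rule r hr h ih =>
    rcases hr with hr | hr
    · subst hr; exact Deduces.assumption (Set.mem_insert _ _)
    · exact Deduces.rule hr ih

end Aux

theorem stmt19 {L : Type} (F : ABAFramework L) (hflat : F.Flat)
    (hwcp : F.WeakContraposition) (E : Set L) (ψ : L)
    (hE : F.ltStable E) (hψ : ψ ∈ F.Cn E ∩ F.assumptions)
    (hne : (F.assumptions \ {ψ}).Nonempty)
    (F' : ABAFramework L)
    (hF' : F' = { rules := insert ⟨ψ, []⟩ F.rules,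
                  assumptions := F.assumptions \ {ψ},
                  assumptions_nonempty := hne,
                  contrary := F.contrary,
                  le := F.le,
                  le_refl := fun a ha => F.le_refl a ha.1,
                  le_trans := fun a ha b hb c hc => F.le_trans a ha.1 b hb.1 c hc.1 }) :
    F'.ltStable (E \ {ψ}) ∧ F'.Cn (E \ {ψ}) = F.Cn E := by
  subst hF'
  obtain ⟨hψCn, hψA⟩ := hψ
  obtain ⟨Sψ, hSψE, hSψ⟩ := hψCn
  obtain ⟨hEA, hcf, hst⟩ := hE
  set R' : Set (ABARule L) := insert ⟨ψ, []⟩ F.rules with hR'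
  have hfact : Deduces R' (∅ : Set L) ψ :=
    Deduces.rule (Set.mem_insert _ _) (fun b hb => absurd hb List.not_mem_nil)
  have toF' : ∀ {S : Set L} {φ : L}, Deduces F.rules S φ → Deduces R' (S \ {ψ}) φ := by
    intro S φ h
    have h2 := deduces_cut (deduces_mono_rules (Set.subset_insert _ _) h) hfact
    simpa using h2
  have fromF' : ∀ {S : Set L} {φ : L}, Deduces R' S φ →
      Deduces F.rules ((S \ {ψ}) ∪ Sψ) φ := by
    intro S φ h
    have h2 := deduces_cut (deduces_elim_fact h) hSψ
    refine deduces_mono ?_ h2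
    intro x hx
    simp only [Set.mem_union, Set.mem_diff, Set.mem_insert_iff, Set.mem_singleton_iff] at *
    tauto
  have hsubE : ∀ {S : Set L}, S ⊆ E \ {ψ} → (S \ {ψ}) ∪ Sψ ⊆ E := by
    intro S hS x hx
    rcases hx with ⟨h1, _⟩ | h
    · exact (hS h1).1
    · exact hSψE h
  have hCn : ∀ {S : Set L}, S ⊆ E → S \ {ψ} ⊆ E \ {ψ} :=
    fun hS x hx => ⟨hS hx.1, hx.2⟩
  constructor
  · refine ⟨fun x hx => ⟨hEA hx.1, hx.2⟩, ?_, ?_⟩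
    · -- conflict-freeness
      intro hatt
      apply hcf
      rcases hatt with ⟨β, hβ, A', hA', hd, hnl⟩ | ⟨α, hα, B', hB', hd, β', hβ', hlt⟩
      · have hd2 := fromF' hd
        by_cases hex : ∃ α ∈ (A' \ {ψ}) ∪ Sψ, F.lt α β
        · obtain ⟨α, hαm, hαlt⟩ := hex
          exact Or.inr ⟨β, hβ.1, _, hsubE hA', hd2, α, hαm, hαlt⟩
        · push_neg at hex
          exact Or.inl ⟨β, hβ.1, _, hsubE hA', hd2, hex⟩
      · have hd2 := fromF' hd
        have hβ'm : β' ∈ (B' \ {ψ}) ∪ Sψ := Or.inl ⟨hβ', (hB' hβ').2⟩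
        exact Or.inr ⟨α, hα.1, _, hsubE hB', hd2, β', hβ'm, hlt⟩
    · -- attacks every outside assumption
      intro β hβ hβE'
      have hβψ : β ≠ ψ := hβ.2
      have hβE : β ∉ E := fun h => hβE' ⟨h, hβψ⟩
      rcases hst β hβ.1 hβE with ⟨β₀, hβ₀, A', hA', hd, hnl⟩ |
        ⟨α, hα, B', hB', hd, β', hβ', hlt⟩
      · rw [Set.mem_singleton_iff] at hβ₀; subst hβ₀
        exact Or.inl ⟨β₀, rfl, A' \ {ψ}, hCn hA', toF' hd, fun a ha => hnl a ha.1⟩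
      · by_cases hαψ : α = ψ
        · subst hαψ
          have hB'A : B' ⊆ F.assumptions := by
            intro x hx
            have := hB' hx
            rw [Set.mem_singleton_iff] at this
            subst this; exact hβ.1
          obtain ⟨α', hα'B', hα'lt, hded⟩ := hwcp B' hB'A α hψA hd ⟨β', hβ', hlt⟩
          have hα'β : α' = β := hB' hα'B'
          subst hα'β
          have h2 : Deduces F.rules {α} (F.contrary α') :=
            deduces_mono (by
              intro x hx
              rcases hx with ⟨h1, h2⟩ | h
              · exact absurd (hB' h1) h2
              · exact h) hded
          have h3 := toF' h2
          refine Or.inl ⟨α', rfl, ∅, Set.empty_subset _, by simpa using h3,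
            fun a ha => absurd ha (Set.notMem_empty a)⟩
        · refine Or.inr ⟨α, ⟨hα, hαψ⟩, B', hB', ?_, β', hβ', hlt⟩
          exact deduces_mono_rules (Set.subset_insert _ _) hd
  · -- Cn equality
    ext φ
    constructor
    · rintro ⟨S, hSE, hd⟩
      exact ⟨(S \ {ψ}) ∪ Sψ, hsubE hSE, fromF' hd⟩
    · rintro ⟨S, hSE, hd⟩
      exact ⟨S \ {ψ}, hCn hSE, toF' hd⟩
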